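/- arXiv:2504.09991 — 2 statements merged into one kernel-verified Lean document; each statement's English description precedes it below -/
import Mathlib

section
/- If W isolates the minimum-weight size-k matching M_k, then the residual graph of M_k contains no cycle of non-positive residual weight. -/
variable {V : Type*} [DecidableEq V]

/-- `M` is a matching in the graph with edge set `E`: a set of edges of `E`
such that no two distinct edges share a vertex. -/
def IsMatching (E M : Finset (Sym2 V)) : Prop :=
  M ⊆ E ∧ ∀ e ∈ M, ∀ f ∈ M, e ≠ f → ∀ v, v ∈ e → v ∉ f

/-- The list of edges of the path given by the vertex list `l`. -/
def pathEdges (l : List V) : List (Sym2 V) :=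
  (l.zip l.tail).map fun p => s(p.1, p.2)

/-- `l` is (the vertex list of) an augmenting path with respect to the matching `M` in the
graph with edge set `E`: a path (distinct vertices, consecutive pairs forming edges of `E`)
with an odd number of edges, alternating between edges outside `M` (the even-indexed, in
particular the first and last) and edges of `M` (the odd-indexed), whose two endpoints are
unmatched by `M`. -/
def IsAugPath (E M : Finset (Sym2 V)) (l : List V) : Prop :=
  2 ≤ l.length ∧ l.Nodup ∧
    (∀ e ∈ pathEdges l, e ∈ E) ∧
    (pathEdges l).length % 2 = 1 ∧
    (∀ i (h : i < (pathEdges l).length), ((pathEdges l)[i] ∈ M ↔ i % 2 = 1)) ∧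
    (∀ e ∈ M, (∀ a, l.head? = some a → a ∉ e) ∧ (∀ a, l.getLast? = some a → a ∉ e))

/-- The weight of a set of edges. -/
def wt (W : Sym2 V → ℤ) (F : Finset (Sym2 V)) : ℤ := ∑ e ∈ F, W e

/-- `W` isolates the matching `M` of size `k`: `M` is a matching of size `k` and every
other matching of size `k` has strictly larger weight. -/
def Isolates (W : Sym2 V → ℤ) (E : Finset (Sym2 V)) (k : ℕ) (M : Finset (Sym2 V)) : Prop :=
  IsMatching E M ∧ M.card = k ∧
    ∀ M', IsMatching E M' → M'.card = k → M' ≠ M → wt W M < wt W M'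

/-- `M` is a minimum-weight matching of size `j`. -/
def MinOfSize (W : Sym2 V → ℤ) (E : Finset (Sym2 V)) (j : ℕ) (M : Finset (Sym2 V)) : Prop :=
  IsMatching E M ∧ M.card = j ∧
    ∀ M', IsMatching E M' → M'.card = j → wt W M ≤ wt W M'

/-- The edge set `E` is bipartite with left part `L`. -/
def Bipartite (E : Finset (Sym2 V)) (L : Finset V) : Prop :=
  ∀ e ∈ E, ∃ u ∈ L, ∃ v, v ∉ L ∧ e = s(u, v)

/-- There is a directed edge `a → b` in the residual graph of the matching `M` (in a
bipartite graph with left part `L`): matched edges are directed from right to left and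
unmatched edges from left to right. -/
def ResStep (E M : Finset (Sym2 V)) (L : Finset V) (a b : V) : Prop :=
  s(a, b) ∈ E ∧ ((s(a, b) ∈ M ∧ a ∉ L) ∨ (s(a, b) ∉ M ∧ a ∈ L))

/-- The residual weight of the directed edge `a → b`: `−W(e)` on matched edges and
`W(e)` on unmatched edges. -/
def resWeight (W : Sym2 V → ℤ) (M : Finset (Sym2 V)) (a b : V) : ℤ :=
  if s(a, b) ∈ M then -W s(a, b) else W s(a, b)

/-- If `W` isolates the minimum-weight size-`k` matching `Mk` of a bipartite graph, then
the residual graph of `Mk` contains no cycle of non-positive residual weight: every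
(vertex-simple, cyclically closed) cycle of the residual graph has strictly positive
residual weight. -/
theorem residual_no_nonpositive_cycle (E : Finset (Sym2 V)) (L : Finset V)
    (hbip : Bipartite E L) (W : Sym2 V → ℤ) (k : ℕ) (Mk : Finset (Sym2 V))
    (hMk : Isolates W E k Mk) :
    ∀ l : List V, l ≠ [] → l.Nodup →
      (∀ p ∈ l.zip (l.rotate 1), ResStep E Mk L p.1 p.2) →
      0 < ((l.zip (l.rotate 1)).map fun p => resWeight W Mk p.1 p.2).sum := by
  classical
  intro l hne hnd hstep
  obtain ⟨⟨hMkE, hMkm⟩, hcard, hmin⟩ := hMk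
  have hn0 : 0 < l.length := List.length_pos_iff.2 hne
  haveI : NeZero l.length := ⟨hn0.ne'⟩
  set n := l.length with hn
  set v : Fin n → V := l.get with hv
  have hvinj : Function.Injective v := List.nodup_iff_injective_get.mp hnd
  have hval : ∀ i : Fin n, ((i + 1 : Fin n) : ℕ) = (i.val + 1) % n := by
    intro i
    rw [Fin.add_def, Fin.val_one']
    conv_rhs => rw [Nat.add_mod, Nat.mod_eq_of_lt i.isLt]
  set e : Fin n → Sym2 V := fun i => s(v i, v (i + 1)) with hedef
  have he : ∀ i : Fin n, e i = s(v i, v (i + 1)) := fun _ => rfl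
  -- the steps of the cycle
  have hstep' : ∀ i : Fin n, ResStep E Mk L (v i) (v (i + 1)) := by
    intro i
    have h1 : (i : ℕ) < (l.zip (l.rotate 1)).length := by
      simp only [List.length_zip, List.length_rotate, min_self]
      exact i.isLt
    have h2 : (l.zip (l.rotate 1))[(i : ℕ)] = (v i, v (i + 1)) := by
      rw [List.getElem_zip, List.getElem_rotate]
      refine Prod.ext ?_ ?_
      · simp [hv]
      · simp only [hv, List.get_eq_getElem, hval]; rfl
    exact hstep (v i, v (i + 1)) (h2 ▸ List.getElem_mem h1)
  have hE : ∀ i : Fin n, e i ∈ E := fun i => (hstep' i).1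
  -- key alternation facts from bipartiteness
  have key : ∀ i : Fin n, (e i ∈ Mk ↔ v i ∉ L) ∧ (v (i + 1) ∈ L ↔ v i ∉ L) := by
    intro i
    obtain ⟨hEi, hor⟩ := hstep' i
    obtain ⟨u, hu, w, hw, hew⟩ := hbip _ hEi
    rw [Sym2.eq_iff] at hew
    rw [← he] at hor
    rcases hew with ⟨h1, h2⟩ | ⟨h1, h2⟩
    · rw [← h1] at hu; rw [← h2] at hw; tauto
    · rw [← h2] at hu; rw [← h1] at hw; tauto
  have halt : ∀ i : Fin n, (e (i + 1) ∈ Mk ↔ e i ∉ Mk) := by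
    intro i
    have h1 := (key (i + 1)).1
    have h2 := (key i).2
    have h3 := (key i).1
    tauto
  -- injectivity of the edge map
  have einj : Function.Injective e := by
    intro i j heq
    have heq' := heq
    rw [he, he, Sym2.eq_iff] at heq'
    rcases heq' with ⟨h1, _⟩ | ⟨h1, h2⟩
    · exact hvinj h1
    · exfalso
      have hi : i = j + 1 := hvinj h1
      have := halt j
      rw [← hi, heq] at this
      tauto
  -- matched and unmatched index sets
  set Sm : Finset (Fin n) := Finset.univ.filter (fun i => e i ∈ Mk) with hSm
  set Su : Finset (Fin n) := Finset.univ.filter (fun i => e i ∉ Mk) with hSu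
  have hScard : Sm.card = Su.card := by
    apply Finset.card_bij (fun i _ => i + 1)
    · intro i hi
      rw [hSm, Finset.mem_filter] at hi
      rw [hSu, Finset.mem_filter]
      exact ⟨Finset.mem_univ _, fun h => (halt i).mp h hi.2⟩
    · intro a _ b _ hab
      exact add_right_cancel hab
    · intro j hj
      rw [hSu, Finset.mem_filter] at hj
      refine ⟨j - 1, ?_, sub_add_cancel j 1⟩
      rw [hSm, Finset.mem_filter]
      refine ⟨Finset.mem_univ _, ?_⟩
      by_contra hc
      have := halt (j - 1)
      rw [sub_add_cancel] at this
      tauto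
  set Cm : Finset (Sym2 V) := Sm.image e with hCm
  set Cu : Finset (Sym2 V) := Su.image e with hCu
  have hCmMk : Cm ⊆ Mk := by
    intro x hx
    rw [hCm, Finset.mem_image] at hx
    obtain ⟨i, hi, rfl⟩ := hx
    exact (Finset.mem_filter.mp hi).2
  have hCuMk : ∀ x ∈ Cu, x ∉ Mk := by
    intro x hx
    rw [hCu, Finset.mem_image] at hx
    obtain ⟨i, hi, rfl⟩ := hx
    exact (Finset.mem_filter.mp hi).2
  -- every matched edge meeting the cycle is a cycle edge
  have huniq : ∀ f ∈ Mk, ∀ g ∈ Mk, ∀ x : V, x ∈ f → x ∈ g → f = g := by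
    intro f hf g hg x hxf hxg
    by_contra hne'
    exact hMkm f hf g hg hne' x hxf hxg
  have hcover : ∀ (j : Fin n) (f : Sym2 V), f ∈ Mk → v j ∈ f → f ∈ Cm := by
    intro j f hf hvf
    by_cases hj : e j ∈ Mk
    · have hfe : f = e j :=
        huniq f hf (e j) hj (v j) hvf (by rw [he]; exact Sym2.mem_mk_left _ _)
      rw [hfe, hCm]
      exact Finset.mem_image_of_mem e (Finset.mem_filter.mpr ⟨Finset.mem_univ _, hj⟩)
    · have hj1 : e (j - 1) ∈ Mk := by
        have := halt (j - 1)
        rw [sub_add_cancel] at this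
        tauto
      have hvj : v j ∈ e (j - 1) := by
        rw [he, sub_add_cancel]
        exact Sym2.mem_mk_right _ _
      have hfe : f = e (j - 1) := huniq f hf _ hj1 (v j) hvf hvj
      rw [hfe, hCm]
      exact Finset.mem_image_of_mem e (Finset.mem_filter.mpr ⟨Finset.mem_univ _, hj1⟩)
  -- membership structure of Cu edges
  have hCuVert : ∀ x : V, ∀ g ∈ Cu, x ∈ g → ∃ i : Fin n, e i ∉ Mk ∧ g = e i ∧ (x = v i ∨ x = v (i + 1)) := by
    intro x g hg hxg
    rw [hCu, Finset.mem_image] at hg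
    obtain ⟨i, hi, rfl⟩ := hg
    refine ⟨i, (Finset.mem_filter.mp hi).2, rfl, ?_⟩
    rw [he, Sym2.mem_iff] at hxg
    exact hxg
  -- the alternate matching
  set M' : Finset (Sym2 V) := (Mk \ Cm) ∪ Cu with hM'
  have hM'sub : M' ⊆ E := by
    intro x hx
    rw [hM', Finset.mem_union] at hx
    rcases hx with hx | hx
    · exact hMkE (Finset.mem_sdiff.mp hx).1
    · rw [hCu, Finset.mem_image] at hx
      obtain ⟨i, _, rfl⟩ := hx
      exact hE i
  have hM'match : IsMatching E M' := by
    refine ⟨hM'sub, ?_⟩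
    intro f hf g hg hfg x hxf hxg
    rw [hM', Finset.mem_union] at hf hg
    rcases hf with hf | hf <;> rcases hg with hg | hg
    · obtain ⟨hf1, _⟩ := Finset.mem_sdiff.mp hf
      obtain ⟨hg1, _⟩ := Finset.mem_sdiff.mp hg
      exact hMkm f hf1 g hg1 hfg x hxf hxg
    · obtain ⟨hf1, hf2⟩ := Finset.mem_sdiff.mp hf
      obtain ⟨i, _, rfl, hxv⟩ := hCuVert x g hg hxg
      rcases hxv with rfl | rfl
      · exact hf2 (hcover i f hf1 hxf)
      · exact hf2 (hcover (i + 1) f hf1 hxf)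
    · obtain ⟨hg1, hg2⟩ := Finset.mem_sdiff.mp hg
      obtain ⟨i, _, rfl, hxv⟩ := hCuVert x f hf hxf
      rcases hxv with rfl | rfl
      · exact hg2 (hcover i g hg1 hxg)
      · exact hg2 (hcover (i + 1) g hg1 hxg)
    · obtain ⟨i, hi1, rfl, hxi⟩ := hCuVert x f hf hxf
      obtain ⟨j, hj1, rfl, hxj⟩ := hCuVert x g hg hxg
      rcases hxi with h1 | h1 <;> rcases hxj with h2 | h2
      · exact hfg (by rw [hvinj (h1 ▸ h2 : v i = v j)])
      · have hij : i = j + 1 := hvinj (h1 ▸ h2)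
        have := halt j
        rw [← hij] at this
        tauto
      · have hij : j = i + 1 := hvinj (h2 ▸ h1)
        have := halt i
        rw [← hij] at this
        tauto
      · have hij : i + 1 = j + 1 := hvinj (h1 ▸ h2)
        exact hfg (by rw [add_right_cancel hij])
  have hCmcard : Cm.card = Sm.card := Finset.card_image_of_injective _ einj
  have hCucard : Cu.card = Su.card := Finset.card_image_of_injective _ einj
  have hdisj : Disjoint (Mk \ Cm) Cu := by
    rw [Finset.disjoint_right]
    intro x hx hx'
    exact hCuMk x hx (Finset.mem_sdiff.mp hx').1
  have hM'card : M'.card = k := by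
    rw [hM', Finset.card_union_of_disjoint hdisj, Finset.card_sdiff_of_subset hCmMk,
      hCmcard, hCucard, ← hScard]
    have hle : Sm.card ≤ Mk.card := by
      rw [← hCmcard]; exact Finset.card_le_card hCmMk
    omega
  have hM'ne : M' ≠ Mk := by
    have hex : ∃ i : Fin n, e i ∉ Mk := by
      by_cases h0 : e 0 ∈ Mk
      · exact ⟨0 + 1, (fun h => ((halt 0).mp h) h0 : e (0 + 1) ∈ Mk → False)⟩
      · exact ⟨0, h0⟩
    obtain ⟨i, hi⟩ := hex
    intro hMM
    apply hi
    rw [← hMM, hM', Finset.mem_union]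
    right
    rw [hCu]
    exact Finset.mem_image_of_mem e (Finset.mem_filter.mpr ⟨Finset.mem_univ _, hi⟩)
  -- weight computation
  have hwtCm : wt W Cm = ∑ i ∈ Sm, W (e i) := Finset.sum_image (fun a _ b _ h => einj h)
  have hwtCu : wt W Cu = ∑ i ∈ Su, W (e i) := Finset.sum_image (fun a _ b _ h => einj h)
  have hwtM' : wt W M' = wt W Mk - wt W Cm + wt W Cu := by
    rw [hM']
    unfold wt
    rw [Finset.sum_union hdisj]
    have := Finset.sum_sdiff (f := W) hCmMk
    unfold wt at *
    linarith
  set S : ℤ := ∑ i : Fin n, resWeight W Mk (v i) (v (i + 1)) with hS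
  have hSsplit : S = -(∑ i ∈ Sm, W (e i)) + ∑ i ∈ Su, W (e i) := by
    rw [hS]
    rw [← Finset.sum_filter_add_sum_filter_not Finset.univ (fun i => e i ∈ Mk)]
    rw [← hSm, ← hSu]
    rw [← Finset.sum_neg_distrib]
    congr 1
    · apply Finset.sum_congr rfl
      intro i hi
      have hi' := (Finset.mem_filter.mp hi).2
      rw [resWeight, ← he, if_pos hi']
    · apply Finset.sum_congr rfl
      intro i hi
      have hi' := (Finset.mem_filter.mp hi).2
      rw [resWeight, ← he, if_neg hi']
  have hwt : wt W M' = wt W Mk + S := by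
    rw [hwtM', hSsplit, hwtCm, hwtCu]; ring
  have hlt := hmin M' hM'match hM'card hM'ne
  have hSpos : 0 < S := by linarith [hwt ▸ hlt]
  -- convert the list sum to S
  have hlist : ((l.zip (l.rotate 1)).map fun p => resWeight W Mk p.1 p.2)
      = List.ofFn (fun i : Fin n => resWeight W Mk (v i) (v (i + 1))) := by
    apply List.ext_getElem
    · simp [List.length_ofFn, List.length_zip, List.length_rotate]; rfl
    · intro i h1 h2
      rw [List.getElem_ofFn, List.getElem_map, List.getElem_zip, List.getElem_rotate]
      have hilt : i < n := by
        simpa [List.length_zip, List.length_rotate] using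
          (by simpa using h1 : i < (l.zip (l.rotate 1)).length)
      simp only [hv, List.get_eq_getElem, hval]; rfl
  rw [hlist, List.sum_ofFn]
  exact hSpos
end

section
/- Let e be a threshold edge in a weighted directed graph with no non-positive-weight cycles: e = (u,v) lies on some but not all minimum-weight s-t paths. Then W(e) = δ'_{s,t} − (δ_{s,u} + δ_{v,t}), where δ_{x,y} denotes the minimum weight of an x-y path and δ'_{s,t} is the minimum weight of an s-t path avoiding e. -/
set_option linter.unusedSectionVars false
set_option maxHeartbeats 1000000


variable {V : Type*} [DecidableEq V]

/-- `l` is (the vertex list of) a simple directed path from `s` to `t` in the directed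
graph with edge set `E`. -/
def DPath (E : Finset (V × V)) (s t : V) (l : List V) : Prop :=
  l ≠ [] ∧ l.head? = some s ∧ l.getLast? = some t ∧ l.Nodup ∧
    ∀ p ∈ l.zip l.tail, p ∈ E

/-- `l` is (the vertex list of) a directed walk from `s` to `t` in the directed graph with
edge set `E` (vertices may repeat). -/
def DWalk (E : Finset (V × V)) (s t : V) (l : List V) : Prop :=
  l ≠ [] ∧ l.head? = some s ∧ l.getLast? = some t ∧
    ∀ p ∈ l.zip l.tail, p ∈ E

/-- The total weight of the walk with vertex list `l` under edge weights `W`. -/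
def dWeight (W : V × V → ℤ) (l : List V) : ℤ :=
  ((l.zip l.tail).map W).sum

/-- Every directed cycle of the graph has strictly positive total weight. -/
def PosCycles (E : Finset (V × V)) (W : V × V → ℤ) : Prop :=
  ∀ l : List V, l ≠ [] → l.Nodup →
    (∀ p ∈ l.zip (l.rotate 1), p ∈ E) →
    0 < ((l.zip (l.rotate 1)).map W).sum

/-- `l` is a minimum-weight (simple) `s`-`t` path. -/
def DMinPath (E : Finset (V × V)) (W : V × V → ℤ) (s t : V) (l : List V) : Prop :=
  DPath E s t l ∧ ∀ l', DPath E s t l' → dWeight W l ≤ dWeight W l'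

lemma edges_append (p : List V) (x : V) (q : List V) :
    ((p ++ x :: q).zip (p ++ x :: q).tail) =
      ((p ++ [x]).zip (p ++ [x]).tail) ++ ((x :: q).zip q) := by
  induction p with
  | nil => simp
  | cons y p ih =>
    cases p with
    | nil => simp
    | cons z p' => simpa using ih

lemma zip_append_left (l1 l2 r : List V) (h : l1.length = l2.length) :
    (l1 ++ r).zip l2 = l1.zip l2 := by
  induction l1 generalizing l2 with
  | nil => cases l2 <;> simp_all
  | cons a l1 ih =>
    cases l2 with
    | nil => simp at h
    | cons b l2 => simp_all

lemma dWeight_split (W : V × V → ℤ) (p : List V) (x : V) (q : List V) :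
    dWeight W (p ++ x :: q) = dWeight W (p ++ [x]) + dWeight W (x :: q) := by
  unfold dWeight
  rw [edges_append]
  simp

lemma head?_append_cons (p : List V) (x : V) (q r : List V) :
    (p ++ x :: q).head? = (p ++ x :: r).head? := by
  cases p <;> simp

lemma getLast?_append_cons (p : List V) (x : V) (q : List V) :
    (p ++ x :: q).getLast? = (x :: q).getLast? := by
  rw [List.getLast?_append]
  have : (x :: q).getLast? = some ((x::q).getLast (by simp)) := List.getLast?_eq_getLast _
  simp [this]

lemma not_nodup_decomp (l : List V) (h : ¬ l.Nodup) :
    ∃ a x b c, l = a ++ x :: b ++ x :: c ∧ (x :: b).Nodup := by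
  induction l with
  | nil => simp at h
  | cons y rest ih =>
    by_cases hr : rest.Nodup
    · have hy : y ∈ rest := by
        by_contra hy; exact h (List.nodup_cons.2 ⟨hy, hr⟩)
      obtain ⟨b, c, hbc, hnb⟩ : ∃ b c, rest = b ++ y :: c ∧ y ∉ b := by
        clear h ih
        induction rest with
        | nil => simp at hy
        | cons z m ihm =>
          by_cases hz : z = y
          · exact ⟨[], m, by simp [hz], by simp⟩
          · obtain ⟨b, c, h1, h2⟩ := ihm (List.Nodup.of_cons hr)
              (by rcases List.mem_cons.1 hy with h|h; exact absurd h.symm hz; exact h)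
            exact ⟨z :: b, c, by simp [h1], by simp [h2, Ne.symm hz]⟩
      refine ⟨[], y, b, c, by simp [hbc], List.nodup_cons.2 ⟨hnb, ?_⟩⟩
      exact (List.nodup_append.1 (hbc ▸ hr)).1
    · obtain ⟨a, x, b, c, h1, h2⟩ := ih hr
      exact ⟨y :: a, x, b, c, by simp [h1], h2⟩

lemma walk_to_path (E : Finset (V × V)) (W : V × V → ℤ) (hpos : PosCycles E W)
    (s t : V) : ∀ n (l : List V), l.length ≤ n → DWalk E s t l →
    ∃ p, DPath E s t p ∧ dWeight W p ≤ dWeight W l := by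
  intro n
  induction n with
  | zero =>
    intro l hl hw
    rcases hw with ⟨h1, -⟩
    rw [Nat.le_zero, List.length_eq_zero_iff] at hl
    exact absurd hl h1
  | succ n ih =>
    intro l hl hw
    obtain ⟨hne, hhead, hlast, hE⟩ := hw
    by_cases hnd : l.Nodup
    · exact ⟨l, ⟨hne, hhead, hlast, hnd, hE⟩, le_refl _⟩
    · obtain ⟨a, x, b, c, hdec, hcyc⟩ := not_nodup_decomp l hnd
      have hassoc : l = a ++ x :: (b ++ x :: c) := by simp [hdec]
      -- edges of l
      have hEl : (l.zip l.tail) =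
          ((a ++ [x]).zip (a ++ [x]).tail) ++
            (((x :: b) ++ [x]).zip ((x :: b) ++ [x]).tail) ++ ((x :: c).zip c) := by
        conv_lhs => rw [hassoc]
        rw [edges_append a x (b ++ x :: c), List.append_assoc]
        congr 1
        have h2 := edges_append (x :: b) x c
        simpa using h2
      -- the shortened walk
      set l' := a ++ x :: c with hl'
      have hEl' : (l'.zip l'.tail) =
          ((a ++ [x]).zip (a ++ [x]).tail) ++ ((x :: c).zip c) := by
        rw [hl', edges_append]
      have hwalk' : DWalk E s t l' := by
        refine ⟨by simp [hl'], ?_, ?_, ?_⟩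
        · rw [hl', head?_append_cons a x c (b ++ x :: c), ← hassoc]; exact hhead
        · rw [hl', getLast?_append_cons, ← getLast?_append_cons (a ++ x :: b) x c]
          rw [show ((a ++ x :: b) ++ x :: c : List V) = l by rw [hassoc]; simp]
          exact hlast
        · intro p hp
          apply hE
          rw [hEl]
          rw [hEl'] at hp
          rcases List.mem_append.1 hp with h | h
          · exact List.mem_append.2 (Or.inl (List.mem_append.2 (Or.inl h)))
          · exact List.mem_append.2 (Or.inr h)
      -- cycle positivity
      have hzipcyc : ((x :: b).zip ((x :: b).rotate 1)) =
          (((x :: b) ++ [x]).zip ((x :: b) ++ [x]).tail) := by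
        have hrot : (x :: b).rotate 1 = b ++ [x] := by
          simp [List.rotate_cons_succ]
        rw [hrot]
        have : ((x :: b) ++ [x]).tail = b ++ [x] := by simp
        rw [this, zip_append_left] <;> simp
      have hcycpos : 0 < dWeight W ((x :: b) ++ [x]) := by
        have := hpos (x :: b) (by simp) hcyc (by
          intro p hp
          apply hE
          rw [hEl]
          rw [hzipcyc] at hp
          exact List.mem_append.2 (Or.inl (List.mem_append.2 (Or.inr hp))))
        rw [hzipcyc] at this
        exact this
      -- weight comparison
      have hwle : dWeight W l' ≤ dWeight W l := by
        have h1 : dWeight W l = dWeight W (a ++ [x]) + dWeight W ((x::b) ++ [x])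
            + dWeight W (x :: c) := by
          rw [hassoc, dWeight_split W a x (b ++ x :: c)]
          have e : (x : V) :: (b ++ x :: c) = (x :: b) ++ x :: c := by simp
          rw [e, dWeight_split W (x :: b) x c]
          ring
        have h2 : dWeight W l' = dWeight W (a ++ [x]) + dWeight W (x :: c) := by
          rw [hl', dWeight_split W a x c]
        omega
      have hlen : l'.length ≤ n := by
        have : l.length ≤ n + 1 := hl
        rw [hdec] at this
        simp only [hl', List.length_append, List.length_cons] at *
        omega
      obtain ⟨p, hp, hple⟩ := ih l' hlen hwalk'
      exact ⟨p, hp, le_trans hple hwle⟩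

lemma mem_zip_decomp (l : List V) (u v : V) (h : (u, v) ∈ l.zip l.tail) :
    ∃ a c, l = a ++ u :: v :: c := by
  induction l with
  | nil => simp at h
  | cons y m ih =>
    cases m with
    | nil => simp at h
    | cons z m' =>
      simp only [List.tail_cons, List.zip_cons_cons, List.mem_cons] at h
      rcases h with h | h
      · obtain ⟨h1, h2⟩ := Prod.mk.injEq .. ▸ h
        exact ⟨[], m', by simp_all⟩
      · obtain ⟨a, c, hac⟩ := ih h
        exact ⟨y :: a, c, by simp [hac]⟩

lemma exists_append_of_getLast? (l : List V) (a : V) (h : l.getLast? = some a) :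
    ∃ l', l = l' ++ [a] := by
  have hne : l ≠ [] := by rintro rfl; simp at h
  refine ⟨l.dropLast, ?_⟩
  rw [List.getLast?_eq_getLast_of_ne_nil hne, Option.some_inj] at h
  conv_lhs => rw [← List.dropLast_append_getLast hne, h]

lemma dWeight_cons_cons (W : V × V → ℤ) (x y : V) (c : List V) :
    dWeight W (x :: y :: c) = W (x, y) + dWeight W (y :: c) := by
  simp [dWeight]

/-- Let `e = (u,v)` be a threshold edge (it lies on some but not all minimum-weight
`s`-`t` paths) in a weighted directed graph all of whose cycles have strictly positive
weight. If `δ_{s,u}`, `δ_{v,t}`, `δ_{s,t}` are the minimum weights of the corresponding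
paths and `δ'_{s,t}` is the minimum weight of an `s`-`t` path avoiding `e`, then
`W(e) = δ'_{s,t} − (δ_{s,u} + δ_{v,t})`. -/
theorem threshold_edge_weight (E : Finset (V × V)) (W : V × V → ℤ)
    (s t u v : V) (hpos : PosCycles E W) (he : (u, v) ∈ E)
    (dsu dvt dst d'st : ℤ)
    (hdsu : (∃ p, DPath E s u p ∧ dWeight W p = dsu) ∧
      ∀ p, DPath E s u p → dsu ≤ dWeight W p)
    (hdvt : (∃ p, DPath E v t p ∧ dWeight W p = dvt) ∧
      ∀ p, DPath E v t p → dvt ≤ dWeight W p)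
    (hdst : (∃ p, DPath E s t p ∧ dWeight W p = dst) ∧
      ∀ p, DPath E s t p → dst ≤ dWeight W p)
    (hd' : (∃ p, DPath E s t p ∧ (u, v) ∉ p.zip p.tail ∧ dWeight W p = d'st) ∧
      ∀ p, DPath E s t p → (u, v) ∉ p.zip p.tail → d'st ≤ dWeight W p)
    (hon : ∃ p, DPath E s t p ∧ dWeight W p = dst ∧ (u, v) ∈ p.zip p.tail)
    (hoff : ∃ p, DPath E s t p ∧ dWeight W p = dst ∧ (u, v) ∉ p.zip p.tail) :
    W (u, v) = d'st - (dsu + dvt) := by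
  -- Step 1: d'st = dst
  obtain ⟨poff, hpoff, hwoff, hnoff⟩ := hoff
  obtain ⟨⟨q, hq, hqno, hqw⟩, hd'min⟩ := hd'
  have hdd : d'st = dst :=
    le_antisymm (hwoff ▸ hd'min poff hpoff hnoff) (hqw ▸ hdst.2 q hq)
  -- Step 2: dsu + W(u,v) + dvt ≤ dst
  obtain ⟨p, hp, hpw, hpmem⟩ := hon
  obtain ⟨a, c, hac⟩ := mem_zip_decomp p u v hpmem
  obtain ⟨hpne, hphead, hplast, hpnd, hpE⟩ := hp
  have hEp : p.zip p.tail =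
      ((a ++ [u]).zip (a ++ [u]).tail) ++ ((u, v) :: ((v :: c).zip c)) := by
    rw [hac, edges_append a u (v :: c)]
    simp
  have hacL : p = (a ++ [u]) ++ v :: c := by simp [hac]
  have hP1 : DPath E s u (a ++ [u]) := by
    refine ⟨by simp, ?_, ?_, ?_, ?_⟩
    · rw [show (a ++ [u] : List V) = a ++ u :: [] from rfl,
        head?_append_cons a u [] (v :: c), ← hac]; exact hphead
    · rw [show (a ++ [u] : List V) = a ++ u :: [] from rfl, getLast?_append_cons]; rfl
    · exact (List.sublist_append_left (a ++ [u]) (v :: c)).nodup (hacL ▸ hpnd)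
    · intro e hep
      exact hpE e (hEp ▸ List.mem_append.2 (Or.inl hep))
  have hP2 : DPath E v t (v :: c) := by
    refine ⟨by simp, by simp, ?_, ?_, ?_⟩
    · rw [← getLast?_append_cons (a ++ [u]) v c, ← hacL]; exact hplast
    · exact (List.sublist_append_right (a ++ [u]) (v :: c)).nodup (hacL ▸ hpnd)
    · intro e hep
      exact hpE e (hEp ▸ List.mem_append.2 (Or.inr (List.mem_cons_of_mem _ hep)))
  have hsplit : dst = dWeight W (a ++ [u]) + W (u, v) + dWeight W (v :: c) := by
    rw [← hpw, hac, dWeight_split W a u (v :: c), dWeight_cons_cons]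
    ring
  have hlow : dsu + W (u, v) + dvt ≤ dst := by
    have h1 := hdsu.2 _ hP1
    have h2 := hdvt.2 _ hP2
    omega
  -- Step 3: dst ≤ dsu + W(u,v) + dvt
  obtain ⟨p1, hp1, hw1⟩ := hdsu.1
  obtain ⟨p2, hp2, hw2⟩ := hdvt.1
  obtain ⟨hp1ne, hp1h, hp1l, hp1nd, hp1E⟩ := hp1
  obtain ⟨hp2ne, hp2h, hp2l, hp2nd, hp2E⟩ := hp2
  obtain ⟨q1, hq1⟩ := exists_append_of_getLast? p1 u hp1l
  obtain ⟨p2', rfl⟩ : ∃ p2', p2 = v :: p2' := by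
    cases p2 with
    | nil => exact absurd rfl hp2ne
    | cons z m =>
      simp only [List.head?_cons, Option.some_inj] at hp2h
      exact ⟨m, by rw [hp2h]⟩
  set w : List V := p1 ++ v :: p2' with hw
  have hEw : w.zip w.tail =
      (p1.zip p1.tail) ++ ((u, v) :: ((v :: p2').zip p2')) := by
    rw [hw, hq1, List.append_assoc, List.singleton_append,
      edges_append q1 u (v :: p2')]
    simp
  have hwalk : DWalk E s t w := by
    refine ⟨by simp [hw, hq1], ?_, ?_, ?_⟩
    · rw [hw, hq1, List.append_assoc, List.singleton_append,
        head?_append_cons q1 u (v :: p2') [], ← hq1]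
      exact hp1h
    · rw [hw, getLast?_append_cons]; exact hp2l
    · intro e hep
      rw [hEw] at hep
      rcases List.mem_append.1 hep with h | h
      · exact hp1E e h
      · rcases List.mem_cons.1 h with h | h
        · exact h ▸ he
        · exact hp2E e h
  have hww : dWeight W w = dsu + W (u, v) + dvt := by
    have : dWeight W w = dWeight W p1 + (W (u, v) + dWeight W (v :: p2')) := by
      unfold dWeight
      rw [hEw]
      simp
    rw [this, hw1, hw2]; ring
  obtain ⟨pw, hpwP, hpwle⟩ := walk_to_path E W hpos s t w.length w le_rfl hwalk
  have hhigh : dst ≤ dsu + W (u, v) + dvt := by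
    have := hdst.2 pw hpwP
    omega
  omega
end
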